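/- For each positive integer l ≤ n, the probability that a uniformly random permutation of {1,...,n} has at least two distinct cycles whose lengths are both divisible by l is at most C(log n)²/l² for some absolute constant C. -/

import Mathlib

open Equiv Function
set_option linter.unusedSectionVars false
set_option linter.deprecated false
set_option maxHeartbeats 2000000

namespace Stmt2Aux


variable {α : Type*} [Fintype α] [DecidableEq α]

lemma perm_mem_periodicPts (σ : Equiv.Perm α) (x : α) : x ∈ Function.periodicPts σ :=
  ⟨orderOf σ, orderOf_pos σ, by
    rw [Function.IsPeriodicPt, Function.IsFixedPt, Equiv.Perm.iterate_eq_pow,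
      pow_orderOf_eq_one]; rfl⟩

lemma perm_minimalPeriod_pos (σ : Equiv.Perm α) (x : α) :
    0 < Function.minimalPeriod σ x :=
  Function.minimalPeriod_pos_of_mem_periodicPts (perm_mem_periodicPts σ x)

lemma sameCycle_iterate (σ : Equiv.Perm α) (x : α) (i : ℕ) :
    σ.SameCycle x ((⇑σ)^[i] x) := ⟨(i : ℤ), by rw [zpow_natCast]; rfl⟩

lemma minimalPeriod_semiconj {β : Type*} {f : α → α} {g : β → β} {e : α → β}
    (he : Function.Injective e) (hc : ∀ a, g (e a) = e (f a)) (x : α) :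
    Function.minimalPeriod g (e x) = Function.minimalPeriod f x := by
  have hsc : Function.Semiconj e f g := fun a => (hc a).symm
  have hiter : ∀ n : ℕ, Function.IsPeriodicPt g n (e x) ↔ Function.IsPeriodicPt f n x := by
    intro n
    unfold Function.IsPeriodicPt Function.IsFixedPt
    rw [show g^[n] (e x) = e (f^[n] x) from (hsc.iterate_right n x).symm]
    exact ⟨fun h => he h, fun h => by rw [h]⟩
  rcases Nat.eq_zero_or_pos (Function.minimalPeriod f x) with h0 | hpos
  · rw [h0]
    rw [Function.minimalPeriod_eq_zero_iff_notMem_periodicPts] at h0 ⊢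
    intro ⟨n, hn, hp⟩
    exact h0 ⟨n, hn, (hiter n).mp hp⟩
  · have hx : x ∈ Function.periodicPts f := Function.minimalPeriod_pos_iff_mem_periodicPts.mp hpos
    have h1 : Function.IsPeriodicPt g (Function.minimalPeriod f x) (e x) :=
      (hiter _).mpr (Function.isPeriodicPt_minimalPeriod f x)
    have hpos' : 0 < Function.minimalPeriod g (e x) :=
      Function.minimalPeriod_pos_of_mem_periodicPts ⟨_, hpos, h1⟩
    exact le_antisymm (h1.minimalPeriod_le hpos)
      (((hiter _).mp (Function.isPeriodicPt_minimalPeriod g (e x))).minimalPeriod_le hpos')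

lemma card_subtype_ne (x : α) : Fintype.card {y : α // y ≠ x} = Fintype.card α - 1 := by
  simp [Fintype.card_subtype_compl, Fintype.card_subtype_eq]

lemma nat_card_prod_subtype {γ δ : Type*} [Fintype γ] [Fintype δ] (Q : γ → δ → Prop) :
    Nat.card {s : γ × δ // Q s.1 s.2} = ∑ c : γ, Nat.card {d : δ // Q c d} := by
  classical
  rw [Nat.card_congr (Equiv.subtypeProdEquivSigmaSubtype Q), Nat.card_eq_fintype_card,
    Fintype.card_sigma]
  exact Finset.sum_congr rfl fun c _ => (Nat.card_eq_fintype_card).symm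

lemma perm_minimalPeriod_le_card (σ : Equiv.Perm α) (x : α) :
    Function.minimalPeriod (⇑σ) x ≤ Fintype.card α := by
  have hinj : Set.InjOn (fun i => (⇑σ)^[i] x)
      ↑(Finset.range (Function.minimalPeriod (⇑σ) x)) := by
    rw [Finset.coe_range]
    exact Function.iterate_injOn_Iio_minimalPeriod
  calc Function.minimalPeriod (⇑σ) x
      = (Finset.range (Function.minimalPeriod (⇑σ) x)).card := (Finset.card_range _).symm
    _ = ((Finset.range (Function.minimalPeriod (⇑σ) x)).image (fun i => (⇑σ)^[i] x)).card :=
        (Finset.card_image_of_injOn hinj).symm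
    _ ≤ Fintype.card α := Finset.card_le_univ _

lemma card_perm_minimalPeriod_le (m : ℕ) :
    ∀ (α : Type) [Fintype α] [DecidableEq α] (x : α),
      Nat.card {τ : Equiv.Perm α // Function.minimalPeriod (⇑τ) x = m} ≤
        Nat.factorial (Fintype.card α - 1) := by
  induction m with
  | zero =>
      intro α _ _ x
      have : IsEmpty {τ : Equiv.Perm α // Function.minimalPeriod (⇑τ) x = 0} :=
        ⟨fun ⟨τ, h⟩ => (perm_minimalPeriod_pos τ x).ne' h⟩
      simp [Nat.card_of_isEmpty]
  | succ m ih =>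
      intro α _ _ x
      rcases Nat.eq_zero_or_pos m with hm | hm
      · -- fixed point case : m + 1 = 1
        subst hm
        have hresp : ∀ (τ : Equiv.Perm α), Function.minimalPeriod (⇑τ) x = 1 →
            ∀ y : α, y ≠ x ↔ τ y ≠ x := by
          intro τ h y
          have hfix : τ x = x := Function.minimalPeriod_eq_one_iff_isFixedPt.mp h
          exact not_congr (τ.injective.eq_iff' hfix).symm
        set F : {τ : Equiv.Perm α // Function.minimalPeriod (⇑τ) x = 1} →
            Equiv.Perm {y : α // y ≠ x} :=
          fun τ => τ.1.subtypePerm (fun y => (hresp τ.1 τ.2 y).symm) with hF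
        have hFinj : Function.Injective F := by
          intro ⟨τ₁, h₁⟩ ⟨τ₂, h₂⟩ h
          ext y
          by_cases hy : y = x
          · subst hy
            rw [Function.minimalPeriod_eq_one_iff_isFixedPt.mp h₁,
              Function.minimalPeriod_eq_one_iff_isFixedPt.mp h₂]
          · have := congrArg (fun (π : Equiv.Perm {y : α // y ≠ x}) => (π ⟨y, hy⟩ : α)) h
            simpa [hF, Equiv.Perm.subtypePerm_apply] using this
        calc Nat.card {τ : Equiv.Perm α // Function.minimalPeriod (⇑τ) x = 1}
            ≤ Nat.card (Equiv.Perm {y : α // y ≠ x}) := Nat.card_le_card_of_injective F hFinj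
          _ = Nat.factorial (Fintype.card α - 1) := by
              rw [Nat.card_eq_fintype_card, Fintype.card_perm, card_subtype_ne]
      · -- inductive step : m ≥ 1
        set β := {y : α // y ≠ x} with hβ
        have hGdef : ∀ (τ : Equiv.Perm α), Function.minimalPeriod (⇑τ) x = m + 1 →
            ∃ (q : β × Equiv.Perm β), Function.minimalPeriod (⇑q.2) q.1 = m ∧
              τ x = (q.1 : α) ∧ (∀ y : β, ((q.2 y : α)) = (Equiv.swap x (τ x) * τ) (y : α)) := by
          intro τ h
          have hfx : τ x ≠ x := by
            intro hf
            rw [Function.minimalPeriod_eq_one_iff_isFixedPt.mpr hf] at h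
            omega
          set σ' := Equiv.swap x (τ x) * τ with hσ'
          have hσ'x : σ' x = x := by
            simp [hσ', Equiv.Perm.mul_apply, Equiv.swap_apply_right]
          have hp : ∀ y : α, y ≠ x ↔ σ' y ≠ x := fun y =>
            not_congr (σ'.injective.eq_iff' hσ'x).symm
          set π := σ'.subtypePerm (p := fun y => y ≠ x) (fun y => (hp y).symm) with hπ
          set b : β := ⟨τ x, hfx⟩ with hb
          have hinj := Function.iterate_injOn_Iio_minimalPeriod (f := ⇑τ) (x := x)
          rw [h] at hinj
          have claim : ∀ i, i < m → (⇑σ')^[i] (τ x) = (⇑τ)^[i+1] x := by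
            intro i
            induction i with
            | zero => intro _; simp
            | succ i ih' =>
                intro hi
                have h1 : (⇑σ')^[i] (τ x) = (⇑τ)^[i+1] x := ih' (Nat.lt_of_succ_lt hi)
                have hne1 : (⇑τ)^[i+2] x ≠ x := by
                  intro hc
                  have : i + 2 = 0 := hinj (by simp only [Set.mem_Iio]; omega)
                    (by simp only [Set.mem_Iio]; omega)
                    (by simpa using hc)
                  omega
                have hne2 : (⇑τ)^[i+2] x ≠ τ x := by
                  intro hc
                  have : i + 2 = 1 := hinj (by simp only [Set.mem_Iio]; omega)
                    (by simp only [Set.mem_Iio]; omega)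
                    (by simpa using hc)
                  omega
                rw [Function.iterate_succ_apply', h1]
                show Equiv.swap x (τ x) (τ ((⇑τ)^[i+1] x)) = (⇑τ)^[i+2] x
                rw [← Function.iterate_succ_apply' (⇑τ) (i+1) x]
                exact Equiv.swap_apply_of_ne_of_ne hne1 hne2
          have hper : Function.IsPeriodicPt (⇑σ') m (τ x) := by
            show (⇑σ')^[m] (τ x) = τ x
            obtain ⟨m', rfl⟩ : ∃ m', m = m' + 1 := ⟨m - 1, by omega⟩
            rw [Function.iterate_succ_apply', claim m' (by omega)]
            show Equiv.swap x (τ x) (τ ((⇑τ)^[m'+1] x)) = τ x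
            rw [← Function.iterate_succ_apply' (⇑τ) (m'+1) x]
            have : (⇑τ)^[m'+2] x = x := by
              rw [show m' + 2 = m' + 1 + 1 from rfl, ← h]
              exact Function.iterate_minimalPeriod
            rw [this, Equiv.swap_apply_left]
          have hpereq : Function.minimalPeriod (⇑σ') (τ x) = m := by
            refine le_antisymm (hper.minimalPeriod_le hm) ?_
            by_contra hlt
            push_neg at hlt
            obtain ⟨p, hpd⟩ : ∃ p, Function.minimalPeriod (⇑σ') (τ x) = p := ⟨_, rfl⟩
            rw [hpd] at hlt
            have hppos : 0 < p := hpd ▸ perm_minimalPeriod_pos σ' (τ x)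
            have hit : (⇑σ')^[p] (τ x) = τ x := hpd ▸ Function.iterate_minimalPeriod
            rw [claim p hlt] at hit
            have : p + 1 = 1 := hinj (by simp only [Set.mem_Iio]; omega)
              (by simp only [Set.mem_Iio]; omega) (by simpa using hit)
            omega
          refine ⟨(b, π), ?_, rfl, fun y => rfl⟩
          show Function.minimalPeriod (⇑π) b = m
          rw [← minimalPeriod_semiconj (f := ⇑π) (g := ⇑σ') (e := Subtype.val)
            Subtype.val_injective (fun a => rfl) b]
          exact hpereq
        classical
        set G : {τ : Equiv.Perm α // Function.minimalPeriod (⇑τ) x = m + 1} →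
            {q : β × Equiv.Perm β // Function.minimalPeriod (⇑q.2) q.1 = m} :=
          fun τ => ⟨(hGdef τ.1 τ.2).choose, (hGdef τ.1 τ.2).choose_spec.1⟩ with hG
        have hGinj : Function.Injective G := by
          intro ⟨τ₁, h₁⟩ ⟨τ₂, h₂⟩ hEq
          obtain ⟨hq1, hx1, hy1⟩ := (hGdef τ₁ h₁).choose_spec
          obtain ⟨hq2, hx2, hy2⟩ := (hGdef τ₂ h₂).choose_spec
          have hqeq : (hGdef τ₁ h₁).choose = (hGdef τ₂ h₂).choose := congrArg Subtype.val hEq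
          have hxeq : τ₁ x = τ₂ x := by rw [hx1, hx2, hqeq]
          have hσ'eq : Equiv.swap x (τ₁ x) * τ₁ = Equiv.swap x (τ₂ x) * τ₂ := by
            ext y
            by_cases hy : y = x
            · subst hy
              simp [Equiv.Perm.mul_apply, Equiv.swap_apply_right, hxeq]
            · have e1 := hy1 ⟨y, hy⟩
              have e2 := hy2 ⟨y, hy⟩
              rw [← e1, ← e2, hqeq]
          have hcancel : τ₁ = τ₂ := by
            have h' : Equiv.swap x (τ₁ x) * τ₁ = Equiv.swap x (τ₁ x) * τ₂ := by
              rw [hσ'eq, hxeq]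
            exact mul_left_cancel h'
          exact Subtype.ext hcancel
        calc Nat.card {τ : Equiv.Perm α // Function.minimalPeriod (⇑τ) x = m + 1}
            ≤ Nat.card {q : β × Equiv.Perm β // Function.minimalPeriod (⇑q.2) q.1 = m} :=
              Nat.card_le_card_of_injective G hGinj
          _ = ∑ b : β, Nat.card {π : Equiv.Perm β // Function.minimalPeriod (⇑π) b = m} := by
              rw [Nat.card_congr (Equiv.subtypeProdEquivSigmaSubtype
                (fun (b : β) (π : Equiv.Perm β) => Function.minimalPeriod (⇑π) b = m))]
              rw [Nat.card_eq_fintype_card, Fintype.card_sigma]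
              exact Finset.sum_congr rfl (fun b _ => (Nat.card_eq_fintype_card).symm)
          _ ≤ ∑ _b : β, Nat.factorial (Fintype.card β - 1) :=
              Finset.sum_le_sum (fun b _ => ih β b)
          _ = Fintype.card β * Nat.factorial (Fintype.card β - 1) := by
              rw [Finset.sum_const, Finset.card_univ, smul_eq_mul]
          _ ≤ Nat.factorial (Fintype.card β) := by
              rcases Nat.eq_zero_or_pos (Fintype.card β) with h|h
              · simp [h]
              · rw [← Nat.succ_pred_eq_of_pos h]; rw [Nat.factorial_succ]; simp
          _ = Nat.factorial (Fintype.card α - 1) := by rw [card_subtype_ne]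

lemma merge_lemma (σ : Equiv.Perm α) {x y : α} (h : ¬ σ.SameCycle x y) {j k : ℕ}
    (hj : Function.minimalPeriod (⇑σ) x = j) (hk : Function.minimalPeriod (⇑σ) y = k) :
    (⇑(σ * Equiv.swap x y))^[k] x = y ∧
    Function.minimalPeriod (⇑(σ * Equiv.swap x y)) x = j + k := by
  set τ := σ * Equiv.swap x y with hτ
  have hjpos : 0 < j := hj ▸ perm_minimalPeriod_pos σ x
  have hkpos : 0 < k := hk ▸ perm_minimalPeriod_pos σ y
  have hxy : x ≠ y := fun he => h (he ▸ Equiv.Perm.SameCycle.refl σ x)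
  have hinjx := Function.iterate_injOn_Iio_minimalPeriod (f := ⇑σ) (x := x)
  have hinjy := Function.iterate_injOn_Iio_minimalPeriod (f := ⇑σ) (x := y)
  rw [hj] at hinjx
  rw [hk] at hinjy
  have hnotx : ∀ i, (⇑σ)^[i] y ≠ x := fun i hc =>
    h (Equiv.Perm.SameCycle.symm (hc ▸ sameCycle_iterate σ y i))
  have hnoty : ∀ i, (⇑σ)^[i] x ≠ y := fun i hc => h (hc ▸ sameCycle_iterate σ x i)
  have claim1 : ∀ i, i < k → (⇑τ)^[i+1] x = (⇑σ)^[i+1] y := by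
    intro i
    induction i with
    | zero =>
        intro _
        show τ x = (⇑σ)^[1] y
        simp [hτ, Equiv.Perm.mul_apply, Equiv.swap_apply_left]
    | succ i ih =>
        intro hi
        have h1 := ih (Nat.lt_of_succ_lt hi)
        have hne1 : (⇑σ)^[i+1] y ≠ x := hnotx (i+1)
        have hne2 : (⇑σ)^[i+1] y ≠ y := by
          intro hc
          have : i + 1 = 0 := hinjy (by simp only [Set.mem_Iio]; omega)
            (by simp only [Set.mem_Iio]; omega) (by simpa using hc)
          omega
        rw [Function.iterate_succ_apply', h1]
        show σ (Equiv.swap x y ((⇑σ)^[i+1] y)) = (⇑σ)^[i+1+1] y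
        rw [Equiv.swap_apply_of_ne_of_ne hne1 hne2]
        exact (Function.iterate_succ_apply' (⇑σ) (i+1) y).symm
  have hky : (⇑τ)^[k] x = y := by
    obtain ⟨k', rfl⟩ : ∃ k', k = k' + 1 := ⟨k - 1, by omega⟩
    rw [claim1 k' (by omega), ← hk]
    exact Function.iterate_minimalPeriod
  have claim2 : ∀ i, i < j → (⇑τ)^[k + (i+1)] x = (⇑σ)^[i+1] x := by
    intro i
    induction i with
    | zero =>
        intro _
        rw [show k + 1 = k + 1 from rfl, Function.iterate_succ_apply', hky]
        show σ (Equiv.swap x y y) = (⇑σ)^[1] x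
        simp [Equiv.swap_apply_right]
    | succ i ih =>
        intro hi
        have h1 := ih (Nat.lt_of_succ_lt hi)
        have hne1 : (⇑σ)^[i+1] x ≠ x := by
          intro hc
          have : i + 1 = 0 := hinjx (by simp only [Set.mem_Iio]; omega)
            (by simp only [Set.mem_Iio]; omega) (by simpa using hc)
          omega
        have hne2 : (⇑σ)^[i+1] x ≠ y := hnoty (i+1)
        rw [show k + (i + 1 + 1) = (k + (i+1)) + 1 from rfl, Function.iterate_succ_apply', h1]
        show σ (Equiv.swap x y ((⇑σ)^[i+1] x)) = (⇑σ)^[i+1+1] x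
        rw [Equiv.swap_apply_of_ne_of_ne hne1 hne2]
        exact (Function.iterate_succ_apply' (⇑σ) (i+1) x).symm
  have hperiod : Function.IsPeriodicPt (⇑τ) (j + k) x := by
    show (⇑τ)^[j + k] x = x
    obtain ⟨j', rfl⟩ : ∃ j', j = j' + 1 := ⟨j - 1, by omega⟩
    rw [show j' + 1 + k = k + (j' + 1) by omega, claim2 j' (by omega), ← hj]
    exact Function.iterate_minimalPeriod
  refine ⟨hky, ?_⟩
  have hle : Function.minimalPeriod (⇑τ) x ≤ j + k :=
    hperiod.minimalPeriod_le (by omega)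
  have hge : j + k ≤ Function.minimalPeriod (⇑τ) x := by
    by_contra hlt
    push_neg at hlt
    obtain ⟨p, hp⟩ : ∃ p, Function.minimalPeriod (⇑τ) x = p := ⟨_, rfl⟩
    rw [hp] at hlt
    have hppos : 0 < p := hp ▸ perm_minimalPeriod_pos τ x
    have hit : (⇑τ)^[p] x = x := hp ▸ Function.iterate_minimalPeriod
    rcases le_or_gt p k with hpk | hpk
    · obtain ⟨p', rfl⟩ : ∃ p', p = p' + 1 := ⟨p - 1, by omega⟩
      rw [claim1 p' (by omega)] at hit
      exact hnotx (p' + 1) hit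
    · obtain ⟨q, rfl⟩ : ∃ q, p = k + (q + 1) := ⟨p - k - 1, by omega⟩
      rw [claim2 q (by omega)] at hit
      have : q + 1 = 0 := hinjx (by simp only [Set.mem_Iio]; omega)
        (by simp only [Set.mem_Iio]; omega) (by simpa using hit)
      omega
  omega

lemma card_triples_le (α : Type) [Fintype α] [DecidableEq α] (j k : ℕ) :
    Nat.card {s : Equiv.Perm α × α × α //
        Function.minimalPeriod (⇑s.1) s.2.1 = j ∧ Function.minimalPeriod (⇑s.1) s.2.2 = k ∧
        ¬ s.1.SameCycle s.2.1 s.2.2} ≤ Nat.factorial (Fintype.card α) := by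
  classical
  set Φ : {s : Equiv.Perm α × α × α //
        Function.minimalPeriod (⇑s.1) s.2.1 = j ∧ Function.minimalPeriod (⇑s.1) s.2.2 = k ∧
        ¬ s.1.SameCycle s.2.1 s.2.2} →
      {t : α × Equiv.Perm α // Function.minimalPeriod (⇑t.2) t.1 = j + k} :=
    fun s => ⟨(s.1.2.1, s.1.1 * Equiv.swap s.1.2.1 s.1.2.2),
      (merge_lemma s.1.1 s.2.2.2 s.2.1 s.2.2.1).2⟩ with hΦ
  have hΦinj : Function.Injective Φ := by
    rintro ⟨⟨σ₁, x₁, y₁⟩, hp₁, hq₁, hn₁⟩ ⟨⟨σ₂, x₂, y₂⟩, hp₂, hq₂, hn₂⟩ h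
    have hval := congrArg Subtype.val h
    have hx : x₁ = x₂ := congrArg Prod.fst hval
    have hτ : σ₁ * Equiv.swap x₁ y₁ = σ₂ * Equiv.swap x₂ y₂ := congrArg Prod.snd hval
    subst hx
    have hy₁ := (merge_lemma σ₁ hn₁ hp₁ hq₁).1
    have hy₂ := (merge_lemma σ₂ hn₂ hp₂ hq₂).1
    rw [hτ] at hy₁
    dsimp only at hy₁ hy₂
    have hy : y₁ = y₂ := hy₁.symm.trans hy₂
    subst hy
    have hσ : σ₁ = σ₂ := by
      calc σ₁ = σ₁ * Equiv.swap x₁ y₁ * Equiv.swap x₁ y₁ := (Equiv.mul_swap_mul_self _ _ _).symm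
        _ = σ₂ * Equiv.swap x₁ y₁ * Equiv.swap x₁ y₁ := by rw [hτ]
        _ = σ₂ := Equiv.mul_swap_mul_self _ _ _
    subst hσ
    rfl
  calc Nat.card _ ≤ Nat.card {t : α × Equiv.Perm α //
        Function.minimalPeriod (⇑t.2) t.1 = j + k} := Nat.card_le_card_of_injective Φ hΦinj
    _ = ∑ x : α, Nat.card {τ : Equiv.Perm α // Function.minimalPeriod (⇑τ) x = j + k} :=
        nat_card_prod_subtype
          (fun (x : α) (τ : Equiv.Perm α) => Function.minimalPeriod (⇑τ) x = j + k)
    _ ≤ ∑ _x : α, Nat.factorial (Fintype.card α - 1) :=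
        Finset.sum_le_sum (fun x _ => card_perm_minimalPeriod_le (j + k) α x)
    _ = Fintype.card α * Nat.factorial (Fintype.card α - 1) := by
        rw [Finset.sum_const, Finset.card_univ, smul_eq_mul]
    _ ≤ Nat.factorial (Fintype.card α) := by
        rcases Nat.eq_zero_or_pos (Fintype.card α) with h|h
        · simp [h]
        · rw [← Nat.succ_pred_eq_of_pos h, Nat.factorial_succ]; simp



lemma main_bound (n l : ℕ) (hl : 1 ≤ l) (hln : l ≤ n) :
    (Nat.card {σ : Equiv.Perm (Fin n) //
        ∃ x y : Fin n, ¬ σ.SameCycle x y ∧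
          l ∣ Function.minimalPeriod σ x ∧ l ∣ Function.minimalPeriod σ y} : ℝ) ≤
      (Nat.factorial n : ℝ) * ((1 + Real.log n) / l)^2 := by
  classical
  set D := (Finset.Icc 1 n).filter (fun j => l ∣ j) with hD
  set cnt : Equiv.Perm (Fin n) → ℕ → ℕ → ℕ := fun σ j k =>
    Nat.card {p : Fin n × Fin n // Function.minimalPeriod (⇑σ) p.1 = j ∧
      Function.minimalPeriod (⇑σ) p.2 = k ∧ ¬ σ.SameCycle p.1 p.2} with hcnt
  set T : ℕ → ℕ → ℕ := fun j k =>
    Nat.card {s : Equiv.Perm (Fin n) × Fin n × Fin n //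
      Function.minimalPeriod (⇑s.1) s.2.1 = j ∧
      Function.minimalPeriod (⇑s.1) s.2.2 = k ∧ ¬ s.1.SameCycle s.2.1 s.2.2} with hT
  set S : ℝ := ∑ j ∈ D, ((j : ℝ))⁻¹ with hS
  set P : Equiv.Perm (Fin n) → Prop := fun σ => ∃ x y : Fin n, ¬ σ.SameCycle x y ∧
    l ∣ Function.minimalPeriod σ x ∧ l ∣ Function.minimalPeriod σ y with hP
  have hS0 : 0 ≤ S := by
    rw [hS]; positivity
  have hlpos : (0:ℝ) < l := by exact_mod_cast hl
  -- Step (i) : harmonic bound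
  have hSle : S ≤ (1 + Real.log n) / l := by
    have hm1 : 1 ≤ n / l := (Nat.one_le_div_iff (by omega)).mpr hln
    have hDim : D = (Finset.Icc 1 (n/l)).image (fun d => l * d) := by
      ext j
      simp only [hD, Finset.mem_filter, Finset.mem_Icc, Finset.mem_image]
      constructor
      · rintro ⟨⟨h1, h2⟩, d, rfl⟩
        refine ⟨d, ⟨?_, ?_⟩, rfl⟩
        · rcases Nat.eq_zero_or_pos d with rfl | hd
          · simp at h1
          · exact hd
        · rw [Nat.le_div_iff_mul_le (by omega : 0 < l), mul_comm]
          exact h2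
      · rintro ⟨d, ⟨hd1, hd2⟩, rfl⟩
        refine ⟨⟨Nat.mul_pos (by omega) (by omega), ?_⟩, ⟨d, rfl⟩⟩
        rw [mul_comm]
        exact (Nat.le_div_iff_mul_le (by omega : 0 < l)).mp hd2
    have hSeq : S = ∑ d ∈ Finset.Icc 1 (n/l), ((l * d : ℕ) : ℝ)⁻¹ := by
      rw [hS, hDim, Finset.sum_image
        (fun a _ b _ h => Nat.eq_of_mul_eq_mul_left (by omega) h)]
    have hfactor : ∑ d ∈ Finset.Icc 1 (n/l), ((l * d : ℕ) : ℝ)⁻¹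
        = (l:ℝ)⁻¹ * ∑ d ∈ Finset.Icc 1 (n/l), ((d : ℕ) : ℝ)⁻¹ := by
      rw [Finset.mul_sum]
      refine Finset.sum_congr rfl fun d _ => ?_
      push_cast
      rw [mul_inv]
    have hharm : ∑ d ∈ Finset.Icc 1 (n/l), ((d : ℕ) : ℝ)⁻¹ = ((harmonic (n/l) : ℚ) : ℝ) := by
      rw [harmonic_eq_sum_Icc]
      push_cast
      rfl
    have hlog : ((harmonic (n/l) : ℚ) : ℝ) ≤ 1 + Real.log n := by
      refine (harmonic_le_one_add_log (n/l)).trans ?_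
      have h1 : Real.log (n/l : ℕ) ≤ Real.log n := by
        apply Real.log_le_log
        · exact_mod_cast hm1
        · exact_mod_cast Nat.div_le_self n l
      linarith
    rw [hSeq, hfactor, hharm, div_eq_inv_mul]
    apply mul_le_mul_of_nonneg_left hlog (by positivity)
  -- Step (ii) : counting bound
  have hTle : ∀ j k : ℕ, T j k ≤ Nat.factorial n := by
    intro j k
    have := card_triples_le (Fin n) j k
    rwa [Fintype.card_fin] at this
  have hTsum : ∀ j k : ℕ, T j k = ∑ σ : Equiv.Perm (Fin n), cnt σ j k := by
    intro j k
    rw [hT, hcnt]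
    exact nat_card_prod_subtype (fun (σ : Equiv.Perm (Fin n)) (p : Fin n × Fin n) =>
      Function.minimalPeriod (⇑σ) p.1 = j ∧
      Function.minimalPeriod (⇑σ) p.2 = k ∧ ¬ σ.SameCycle p.1 p.2)
  have hbadcount : (Nat.card {σ : Equiv.Perm (Fin n) //
      ∃ x y : Fin n, ¬ σ.SameCycle x y ∧
        l ∣ Function.minimalPeriod σ x ∧ l ∣ Function.minimalPeriod σ y} : ℕ)
      = (Finset.univ.filter P).card := by
    rw [Nat.card_eq_fintype_card]
    exact Fintype.card_subtype P
  have keyσ : ∀ σ ∈ Finset.univ.filter P,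
      (1:ℝ) ≤ ∑ j ∈ D, ∑ k ∈ D, (cnt σ j k : ℝ) / ((j:ℝ) * (k:ℝ)) := by
    intro σ hσ
    rw [Finset.mem_filter] at hσ
    obtain ⟨x, y, hxy, hdx, hdy⟩ := hσ.2
    obtain ⟨j₀, hj₀⟩ : ∃ j₀, Function.minimalPeriod (⇑σ) x = j₀ := ⟨_, rfl⟩
    obtain ⟨k₀, hk₀⟩ : ∃ k₀, Function.minimalPeriod (⇑σ) y = k₀ := ⟨_, rfl⟩
    have hj₀pos : 0 < j₀ := hj₀ ▸ perm_minimalPeriod_pos σ x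
    have hk₀pos : 0 < k₀ := hk₀ ▸ perm_minimalPeriod_pos σ y
    have hj₀n : j₀ ≤ n := by
      have := perm_minimalPeriod_le_card σ x
      rw [Fintype.card_fin, hj₀] at this
      exact this
    have hk₀n : k₀ ≤ n := by
      have := perm_minimalPeriod_le_card σ y
      rw [Fintype.card_fin, hk₀] at this
      exact this
    have hj₀D : j₀ ∈ D := by
      rw [hD, Finset.mem_filter, Finset.mem_Icc]
      exact ⟨⟨hj₀pos, hj₀n⟩, hj₀ ▸ hdx⟩
    have hk₀D : k₀ ∈ D := by
      rw [hD, Finset.mem_filter, Finset.mem_Icc]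
      exact ⟨⟨hk₀pos, hk₀n⟩, hk₀ ▸ hdy⟩
    -- lower bound on cnt
    have hcntlb : j₀ * k₀ ≤ cnt σ j₀ k₀ := by
      set ψ : Fin j₀ × Fin k₀ → {p : Fin n × Fin n //
          Function.minimalPeriod (⇑σ) p.1 = j₀ ∧
          Function.minimalPeriod (⇑σ) p.2 = k₀ ∧ ¬ σ.SameCycle p.1 p.2} :=
        fun ab => ⟨((⇑σ)^[(ab.1 : ℕ)] x, (⇑σ)^[(ab.2 : ℕ)] y), by
          refine ⟨?_, ?_, ?_⟩
          · rw [Function.minimalPeriod_apply_iterate (perm_mem_periodicPts σ x)]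
            exact hj₀
          · rw [Function.minimalPeriod_apply_iterate (perm_mem_periodicPts σ y)]
            exact hk₀
          · intro hs
            simp only [Equiv.Perm.iterate_eq_pow] at hs
            exact hxy hs.of_pow_left.of_pow_right⟩ with hψ
      have hψinj : Function.Injective ψ := by
        intro ⟨a₁, b₁⟩ ⟨a₂, b₂⟩ h
        have hval := congrArg Subtype.val h
        have h1 : (⇑σ)^[(a₁ : ℕ)] x = (⇑σ)^[(a₂ : ℕ)] x := congrArg Prod.fst hval
        have h2 : (⇑σ)^[(b₁ : ℕ)] y = (⇑σ)^[(b₂ : ℕ)] y := congrArg Prod.snd hval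
        have hinjx := Function.iterate_injOn_Iio_minimalPeriod (f := ⇑σ) (x := x)
        have hinjy := Function.iterate_injOn_Iio_minimalPeriod (f := ⇑σ) (x := y)
        rw [hj₀] at hinjx
        rw [hk₀] at hinjy
        have ha : (a₁ : ℕ) = (a₂ : ℕ) := hinjx (Set.mem_Iio.mpr a₁.2) (Set.mem_Iio.mpr a₂.2) h1
        have hb : (b₁ : ℕ) = (b₂ : ℕ) := hinjy (Set.mem_Iio.mpr b₁.2) (Set.mem_Iio.mpr b₂.2) h2
        exact Prod.ext (Fin.ext ha) (Fin.ext hb)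
      have := Nat.card_le_card_of_injective ψ hψinj
      simpa [Nat.card_eq_fintype_card, hcnt] using this
    have hterm : (1:ℝ) ≤ (cnt σ j₀ k₀ : ℝ) / ((j₀:ℝ) * (k₀:ℝ)) := by
      rw [le_div_iff₀ (by positivity), one_mul]
      exact_mod_cast hcntlb
    calc (1:ℝ) ≤ (cnt σ j₀ k₀ : ℝ) / ((j₀:ℝ) * (k₀:ℝ)) := hterm
      _ ≤ ∑ k ∈ D, (cnt σ j₀ k : ℝ) / ((j₀:ℝ) * (k:ℝ)) :=
          Finset.single_le_sum (f := fun k => (cnt σ j₀ k : ℝ) / ((j₀:ℝ) * (k:ℝ)))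
            (fun k _ => by positivity) hk₀D
      _ ≤ ∑ j ∈ D, ∑ k ∈ D, (cnt σ j k : ℝ) / ((j:ℝ) * (k:ℝ)) :=
          Finset.single_le_sum (f := fun j => ∑ k ∈ D, (cnt σ j k : ℝ) / ((j:ℝ) * (k:ℝ)))
            (fun j _ => by positivity) hj₀D
  -- now the chain
  have hchain : (Nat.card {σ : Equiv.Perm (Fin n) //
      ∃ x y : Fin n, ¬ σ.SameCycle x y ∧
        l ∣ Function.minimalPeriod σ x ∧ l ∣ Function.minimalPeriod σ y} : ℝ)
      ≤ (Nat.factorial n : ℝ) * (S * S) := by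
    rw [hbadcount]
    calc ((Finset.univ.filter P).card : ℝ)
        = ∑ _σ ∈ Finset.univ.filter P, (1:ℝ) := by
          rw [Finset.sum_const, nsmul_eq_mul, mul_one]
      _ ≤ ∑ σ ∈ Finset.univ.filter P, ∑ j ∈ D, ∑ k ∈ D, (cnt σ j k : ℝ) / ((j:ℝ) * (k:ℝ)) :=
          Finset.sum_le_sum keyσ
      _ ≤ ∑ σ : Equiv.Perm (Fin n), ∑ j ∈ D, ∑ k ∈ D, (cnt σ j k : ℝ) / ((j:ℝ) * (k:ℝ)) :=
          Finset.sum_le_sum_of_subset_of_nonneg (Finset.filter_subset _ _)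
            (fun σ _ _ => by positivity)
      _ = ∑ j ∈ D, ∑ k ∈ D, (T j k : ℝ) / ((j:ℝ) * (k:ℝ)) := by
          rw [Finset.sum_comm]
          refine Finset.sum_congr rfl fun j _ => ?_
          rw [Finset.sum_comm]
          refine Finset.sum_congr rfl fun k _ => ?_
          rw [← Finset.sum_div]
          congr 1
          rw [hTsum j k]
          push_cast
          rfl
      _ ≤ ∑ j ∈ D, ∑ k ∈ D, (Nat.factorial n : ℝ) / ((j:ℝ) * (k:ℝ)) := by
          refine Finset.sum_le_sum fun j hj => Finset.sum_le_sum fun k hk => ?_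
          have hj1 : 1 ≤ j := (Finset.mem_Icc.mp (Finset.mem_filter.mp (hD ▸ hj)).1).1
          have hk1 : 1 ≤ k := (Finset.mem_Icc.mp (Finset.mem_filter.mp (hD ▸ hk)).1).1
          have hjk : (0:ℝ) < (j:ℝ) * (k:ℝ) := by
            have : (1:ℝ) ≤ (j:ℝ) := by exact_mod_cast hj1
            have : (1:ℝ) ≤ (k:ℝ) := by exact_mod_cast hk1
            nlinarith
          have hTk : (T j k : ℝ) ≤ (Nat.factorial n : ℝ) := by exact_mod_cast hTle j k
          gcongr
      _ = (Nat.factorial n : ℝ) * (S * S) := by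
          rw [hS, show (∑ j ∈ D, (j:ℝ)⁻¹) * (∑ k ∈ D, (k:ℝ)⁻¹)
            = ∑ j ∈ D, ∑ k ∈ D, (j:ℝ)⁻¹ * (k:ℝ)⁻¹ from Finset.sum_mul_sum _ _ _ _,
            Finset.mul_sum]
          refine Finset.sum_congr rfl fun j _ => ?_
          rw [Finset.mul_sum]
          refine Finset.sum_congr rfl fun k _ => ?_
          rw [div_eq_mul_inv, mul_inv]
  calc _ ≤ (Nat.factorial n : ℝ) * (S * S) := hchain
    _ ≤ (Nat.factorial n : ℝ) * (((1 + Real.log n) / l) * ((1 + Real.log n) / l)) := by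
        apply mul_le_mul_of_nonneg_left ?_ (by positivity)
        have hB0 : 0 ≤ (1 + Real.log n) / l := by
          have h1n : (1:ℝ) ≤ (n:ℝ) := by exact_mod_cast hl.trans hln
          have : 0 ≤ Real.log n := Real.log_nonneg h1n
          positivity
        exact mul_le_mul hSle hSle hS0 hB0
    _ = (Nat.factorial n : ℝ) * ((1 + Real.log n) / l)^2 := by ring


end Stmt2Aux


/-- There is an absolute constant `C` such that for every `n` and every positive `l ≤ n`,
the probability that a uniformly random permutation of `{1,...,n}` has at least two
distinct cycles whose lengths are both divisible by `l` is at most `C·(log n)²/l²`.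
Two distinct cycles are witnessed by two points lying in different cycles. -/
theorem stmt2 :
    ∃ C : ℝ, 0 < C ∧ ∀ n l : ℕ, 1 ≤ l → l ≤ n →
      (Nat.card {σ : Equiv.Perm (Fin n) //
          ∃ x y : Fin n, ¬ σ.SameCycle x y ∧
            l ∣ Function.minimalPeriod σ x ∧ l ∣ Function.minimalPeriod σ y} : ℝ)
        / (Nat.card (Equiv.Perm (Fin n)))
        ≤ C * (Real.log n) ^ 2 / l ^ 2 := by
  have hlog2 : 0 < Real.log 2 := Real.log_pos (by norm_num)
  have hC1 : (0:ℝ) < 1 + (Real.log 2)⁻¹ := by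
    have : 0 < (Real.log 2)⁻¹ := inv_pos.mpr hlog2
    linarith
  refine ⟨(1 + (Real.log 2)⁻¹)^2, pow_pos hC1 2, ?_⟩
  intro n l hl hln
  classical
  rcases eq_or_lt_of_le (show 1 ≤ n by omega) with hn1 | hn2
  · -- n = 1
    have hl1 : l = 1 := by omega
    subst hl1
    have hne : IsEmpty {σ : Equiv.Perm (Fin n) //
        ∃ x y : Fin n, ¬ σ.SameCycle x y ∧
          1 ∣ Function.minimalPeriod σ x ∧ 1 ∣ Function.minimalPeriod σ y} := by
      constructor
      rintro ⟨σ, x, y, hxy, -, -⟩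
      have hxyeq : x = y := by
        have : Subsingleton (Fin n) := by rw [← hn1]; infer_instance
        exact Subsingleton.elim x y
      exact hxy (hxyeq ▸ Equiv.Perm.SameCycle.refl σ x)
    rw [Nat.card_of_isEmpty, ← hn1]
    norm_num [Real.log_one]
  · -- n ≥ 2
    have key := Stmt2Aux.main_bound n l hl hln
    rw [Nat.card_eq_fintype_card (α := Equiv.Perm (Fin n)), Fintype.card_perm, Fintype.card_fin]
    have hfac : (0:ℝ) < (Nat.factorial n : ℝ) := by
      exact_mod_cast Nat.factorial_pos n
    have hlpos : (0:ℝ) < (l:ℝ) := by exact_mod_cast hl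
    have hlogn2 : Real.log 2 ≤ Real.log n := by
      apply Real.log_le_log (by norm_num)
      exact_mod_cast hn2
    have hlognpos : 0 < Real.log n := lt_of_lt_of_le hlog2 hlogn2
    have hbnd : 1 + Real.log n ≤ (1 + (Real.log 2)⁻¹) * Real.log n := by
      have h1 : (Real.log 2)⁻¹ * Real.log 2 ≤ (Real.log 2)⁻¹ * Real.log n :=
        mul_le_mul_of_nonneg_left hlogn2 (inv_nonneg.mpr hlog2.le)
      rw [inv_mul_cancel₀ hlog2.ne'] at h1
      nlinarith
    calc (Nat.card {σ : Equiv.Perm (Fin n) //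
          ∃ x y : Fin n, ¬ σ.SameCycle x y ∧
            l ∣ Function.minimalPeriod σ x ∧ l ∣ Function.minimalPeriod σ y} : ℝ)
          / (Nat.factorial n : ℝ)
        ≤ ((Nat.factorial n : ℝ) * ((1 + Real.log n) / l)^2) / (Nat.factorial n : ℝ) := by
          gcongr
      _ = ((1 + Real.log n) / l)^2 := by
          field_simp
      _ ≤ (((1 + (Real.log 2)⁻¹) * Real.log n) / l)^2 := by
          apply pow_le_pow_left₀ ?_ ?_ 2
          · have : 0 ≤ Real.log n := hlognpos.le
            positivity
          · gcongr
      _ = (1 + (Real.log 2)⁻¹)^2 * Real.log n ^ 2 / l ^ 2 := by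
          rw [div_pow, mul_pow]
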